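/- Let X be a topological space with at least 3 points. If for every x ∈ X the subspace X \ {x} is a T₀ space, then X is a T₀ space. -/

import Mathlib

theorem t0_reconstructible (X : Type*) [TopologicalSpace X]
    (hcard : 3 ≤ Cardinal.mk X)
    (h : ∀ x : X, T0Space ({x}ᶜ : Set X)) : T0Space X := by
  refine ⟨fun x y hxy => ?_⟩
  obtain ⟨z, hzx, hzy⟩ := Cardinal.three_le hcard x y
  haveI := h z
  have hx : x ∈ ({z}ᶜ : Set X) := by simp [hzx.symm]
  have hy : y ∈ ({z}ᶜ : Set X) := by simp [hzy.symm]
  have : Inseparable (⟨x, hx⟩ : ({z}ᶜ : Set X)) ⟨y, hy⟩ :=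
    (Topology.IsInducing.subtypeVal.inseparable_iff).mp hxy
  exact congrArg Subtype.val this.eq
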